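/- The geometric entanglement of the state |K_3^3⟩ across any bipartition of the three qubits is 1/4; equivalently, the maximal squared overlap of |K_3^3⟩ with any state that is a product across the bipartition {1,2}|{3} equals 3/4. -/

import Mathlib

abbrev QState (n : ℕ) := (Fin n → Bool) → ℂ

noncomputable def plusState (n : ℕ) : QState n := fun _ => ((1 / Real.sqrt (2 ^ n) : ℝ) : ℂ)

def CZgate {n : ℕ} (e : Finset (Fin n)) (ψ : QState n) : QState n :=
  fun x => (if ∀ i ∈ e, x i = true then (-1 : ℂ) else 1) * ψ x

/-- `|K_3^3⟩ = CCZ |+++⟩ = (1/√8) Σ_x (-1)^{x₁x₂x₃} |x⟩`. -/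
noncomputable def K33 : QState 3 := CZgate Finset.univ (plusState 3)

lemma sum_fin3 (f : (Fin 3 → Bool) → ℂ) :
    ∑ x : Fin 3 → Bool, f x = ∑ p : Bool × Bool × Bool, f ![p.1, p.2.1, p.2.2] := by
  refine (Fintype.sum_bijective (fun p : Bool × Bool × Bool => ![p.1, p.2.1, p.2.2]) ?_ _ _
    (fun p => rfl)).symm
  decide

lemma K33_eval (a b c : Bool) :
    K33 ![a, b, c] = (if a && b && c then -1 else 1) * ((1 / Real.sqrt 8 : ℝ) : ℂ) := by
  cases a <;> cases b <;> cases c <;>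
    norm_num [K33, CZgate, plusState, Fin.forall_fin_succ, Matrix.cons_val_zero,
      Matrix.cons_val_one, Matrix.head_cons]

lemma overlap_eq (φ : Bool → Bool → ℂ) (χ : Bool → ℂ) :
    (∑ x : Fin 3 → Bool, (starRingEnd ℂ) (φ (x 0) (x 1) * χ (x 2)) * K33 x) =
    ((1 / Real.sqrt 8 : ℝ) : ℂ) *
      ((starRingEnd ℂ) (χ false) *
        (starRingEnd ℂ) (φ false false + φ false true + φ true false + φ true true)
       + (starRingEnd ℂ) (χ true) *
        (starRingEnd ℂ) (φ false false + φ false true + φ true false - φ true true)) := by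
  rw [sum_fin3]
  simp only [Fintype.sum_prod_type, Fintype.sum_bool, K33_eval, Matrix.cons_val_zero,
    Matrix.cons_val_one, Matrix.head_cons, Matrix.cons_val_two, Matrix.tail_cons]
  simp only [Bool.and_self, Bool.and_true, Bool.and_false, Bool.true_and, Bool.false_and,
    if_true, if_false, reduceIte, Bool.false_eq_true, map_mul, map_add, map_sub]
  ring

lemma cs2 (a b c d : ℂ) :
    Complex.normSq (a * c + b * d) ≤
      (Complex.normSq a + Complex.normSq b) * (Complex.normSq c + Complex.normSq d) := by
  have key : (Complex.normSq a + Complex.normSq b) * (Complex.normSq c + Complex.normSq d)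
      = Complex.normSq (a * c + b * d)
        + Complex.normSq (a * (starRingEnd ℂ) d - b * (starRingEnd ℂ) c) := by
    simp only [Complex.normSq_apply, Complex.add_re, Complex.add_im, Complex.mul_re,
      Complex.mul_im, Complex.sub_re, Complex.sub_im, Complex.conj_re, Complex.conj_im]
    ring
  have := Complex.normSq_nonneg (a * (starRingEnd ℂ) d - b * (starRingEnd ℂ) c)
  linarith

lemma par (p q : ℂ) :
    Complex.normSq (p + q) + Complex.normSq (p - q)
      = 2 * (Complex.normSq p + Complex.normSq q) := by
  simp only [Complex.normSq_apply, Complex.add_re, Complex.add_im, Complex.sub_re,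
    Complex.sub_im]
  ring

lemma cs3 (a b c : ℂ) :
    Complex.normSq (a + b + c) ≤
      3 * (Complex.normSq a + Complex.normSq b + Complex.normSq c) := by
  have key : 3 * (Complex.normSq a + Complex.normSq b + Complex.normSq c)
      - Complex.normSq (a + b + c)
      = Complex.normSq (a - b) + Complex.normSq (b - c) + Complex.normSq (a - c) := by
    simp only [Complex.normSq_apply, Complex.add_re, Complex.add_im, Complex.sub_re,
      Complex.sub_im]
    ring
  have h1 := Complex.normSq_nonneg (a - b)
  have h2 := Complex.normSq_nonneg (b - c)
  have h3 := Complex.normSq_nonneg (a - c)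
  linarith

/-- the maximal squared overlap of `|K_3^3⟩` with states that are
product across the bipartition `{1,2}|{3}` equals `3/4`; hence the geometric
entanglement across this bipartition is `1 - 3/4 = 1/4`. -/
theorem stmt6 :
    IsGreatest
      {r : ℝ | ∃ (φ : Bool → Bool → ℂ) (χ : Bool → ℂ),
        (∑ a : Bool, ∑ b : Bool, Complex.normSq (φ a b)) = 1 ∧
        (∑ c : Bool, Complex.normSq (χ c)) = 1 ∧
        r = Complex.normSq
          (∑ x : Fin 3 → Bool, (starRingEnd ℂ) (φ (x 0) (x 1) * χ (x 2)) * K33 x)}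
      (3 / 4)
    ∧ (1 : ℝ) - 3 / 4 = 1 / 4 := by
  have h2 : Real.sqrt 2 * Real.sqrt 2 = 2 := Real.mul_self_sqrt (by norm_num)
  have h3 : Real.sqrt 3 * Real.sqrt 3 = 3 := Real.mul_self_sqrt (by norm_num)
  have h8 : Real.sqrt 8 * Real.sqrt 8 = 8 := Real.mul_self_sqrt (by norm_num)
  have h2p : (0 : ℝ) < Real.sqrt 2 := Real.sqrt_pos.mpr (by norm_num)
  have h3p : (0 : ℝ) < Real.sqrt 3 := Real.sqrt_pos.mpr (by norm_num)
  have h8p : (0 : ℝ) < Real.sqrt 8 := Real.sqrt_pos.mpr (by norm_num)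
  refine ⟨⟨?_, ?_⟩, by norm_num⟩
  · -- membership
    refine ⟨fun a b => if a && b then 0 else ((1 / Real.sqrt 3 : ℝ) : ℂ),
      fun _ => ((1 / Real.sqrt 2 : ℝ) : ℂ), ?_, ?_, ?_⟩
    · simp only [Fintype.sum_bool, Bool.and_self, Bool.and_true, Bool.and_false,
        Bool.true_and, Bool.false_and, if_true, if_false, reduceIte, Bool.false_eq_true,
        Complex.normSq_ofReal, Complex.normSq_zero]
      field_simp
      linarith
    · simp only [Fintype.sum_bool, Complex.normSq_ofReal]
      field_simp
      linarith [h2]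
    · rw [overlap_eq (fun a b => if (a && b) = true then (0 : ℂ) else ((1 / Real.sqrt 3 : ℝ) : ℂ))
        (fun _ => ((1 / Real.sqrt 2 : ℝ) : ℂ))]
      simp only [Bool.and_self, Bool.and_false, Bool.false_and, Bool.and_true, Bool.true_and,
        reduceIte, Bool.false_eq_true, if_false, if_true]
      push_cast
      have hx : (1 / ((Real.sqrt 8 : ℝ) : ℂ) *
          ((starRingEnd ℂ) (1 / ((Real.sqrt 2 : ℝ) : ℂ)) *
            (starRingEnd ℂ) (1 / ((Real.sqrt 3 : ℝ) : ℂ) + 1 / ((Real.sqrt 3 : ℝ) : ℂ) + 1 / ((Real.sqrt 3 : ℝ) : ℂ) + 0) +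
           (starRingEnd ℂ) (1 / ((Real.sqrt 2 : ℝ) : ℂ)) *
            (starRingEnd ℂ) (1 / ((Real.sqrt 3 : ℝ) : ℂ) + 1 / ((Real.sqrt 3 : ℝ) : ℂ) + 1 / ((Real.sqrt 3 : ℝ) : ℂ) - 0)))
          = (((6 / (Real.sqrt 8 * Real.sqrt 2 * Real.sqrt 3)) : ℝ) : ℂ) := by
        simp only [map_add, map_sub, map_zero, map_div₀, map_one, Complex.conj_ofReal]
        push_cast
        field_simp
        ring
      rw [hx, Complex.normSq_ofReal]
      have hprod : (Real.sqrt 8 * Real.sqrt 2 * Real.sqrt 3) * (Real.sqrt 8 * Real.sqrt 2 * Real.sqrt 3) = 48 := by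
        rw [show (Real.sqrt 8 * Real.sqrt 2 * Real.sqrt 3) * (Real.sqrt 8 * Real.sqrt 2 * Real.sqrt 3)
          = (Real.sqrt 8 * Real.sqrt 8) * ((Real.sqrt 2 * Real.sqrt 2) * (Real.sqrt 3 * Real.sqrt 3)) by ring,
          h8, h2, h3]
        norm_num
      field_simp
      nlinarith [hprod]
  · -- upper bound
    rintro r ⟨φ, χ, hφ, hχ, rfl⟩
    rw [overlap_eq, Complex.normSq_mul, Complex.normSq_ofReal]
    simp only [Fintype.sum_bool] at hφ hχ
    set P := φ false false + φ false true + φ true false with hP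
    set Q := φ true true with hQ
    have e1 : φ false false + φ false true + φ true false + φ true true = P + Q := by
      rw [hP, hQ]
    have e2 : φ false false + φ false true + φ true false - φ true true = P - Q := by
      rw [hP, hQ]
    rw [e1, e2]
    have hcs := cs2 ((starRingEnd ℂ) (χ false)) ((starRingEnd ℂ) (χ true))
      ((starRingEnd ℂ) (P + Q)) ((starRingEnd ℂ) (P - Q))
    simp only [Complex.normSq_conj] at hcs
    have hχ1 : Complex.normSq (χ false) + Complex.normSq (χ true) = 1 := by linarith
    rw [hχ1, one_mul] at hcs
    have hpar := par P Q
    have hcs3 : Complex.normSq P ≤ 3 * (Complex.normSq (φ false false)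
        + Complex.normSq (φ false true) + Complex.normSq (φ true false)) := cs3 _ _ _
    have hsum : Complex.normSq (φ false false) + Complex.normSq (φ false true)
        + Complex.normSq (φ true false) = 1 - Complex.normSq Q := by
      rw [hQ]; linarith
    have hQ0 : 0 ≤ Complex.normSq Q := Complex.normSq_nonneg Q
    have h18 : (1 / Real.sqrt 8) * (1 / Real.sqrt 8) = 1 / 8 := by
      field_simp
      linarith [h8]
    rw [h18]
    have hT : Complex.normSq ((starRingEnd ℂ) (χ false) * (starRingEnd ℂ) (P + Q)
        + (starRingEnd ℂ) (χ true) * (starRingEnd ℂ) (P - Q)) ≤ 6 := by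
      nlinarith
    nlinarith
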